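/- If A and B are closed subsets of a topological space X such that for every open U ⊆ X and every k ≤ n the singular homology groups H_k(U, U \ A; G) and H_k(U, U \ B; G) vanish, then for every open U ⊆ X and every k ≤ n the group H_k(U, U \ (A ∪ B); G) vanishes. -/

import Mathlib

open CategoryTheory CategoryTheory.Limits AlgebraicTopology

/-- The functor sending a type `S` to the free `G`-coefficient group `S →₀ G`. -/
noncomputable def coeffFunctor (G : Type) [AddCommGroup G] : Type ⥤ AddCommGrpCat where
  obj S := AddCommGrpCat.of (S →₀ G)
  map f := AddCommGrpCat.ofHom (Finsupp.mapDomain.addMonoidHom f)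
  map_id S := by ext; simp [Finsupp.mapDomain_single]
  map_comp f g := by ext; simp [Finsupp.mapDomain_single]

/-- The singular chain complex of `X` with coefficients in `G`. -/
noncomputable def singularChains (G : Type) [AddCommGroup G] (X : Type) [TopologicalSpace X] :
    ChainComplex AddCommGrpCat ℕ :=
  (alternatingFaceMapComplex AddCommGrpCat).obj
    (TopCat.toSSet.obj (TopCat.of X) ⋙ coeffFunctor G)

/-- The chain map induced by a continuous map. -/
noncomputable def singularChainsMap (G : Type) [AddCommGroup G] {X Y : Type}
    [TopologicalSpace X] [TopologicalSpace Y] (f : C(X, Y)) :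
    singularChains G X ⟶ singularChains G Y :=
  (alternatingFaceMapComplex AddCommGrpCat).map
    (Functor.whiskerRight (TopCat.toSSet.map (TopCat.ofHom f : TopCat.of X ⟶ TopCat.of Y)) (coeffFunctor G))

lemma singularChainsMap_comp (G : Type) [AddCommGroup G] {X Y Z : Type}
    [TopologicalSpace X] [TopologicalSpace Y] [TopologicalSpace Z] (f : C(X, Y)) (g : C(Y, Z)) :
    singularChainsMap G (g.comp f) = singularChainsMap G f ≫ singularChainsMap G g := by
  unfold singularChainsMap
  first
    | (erw [← Functor.map_comp, ← Functor.whiskerRight_comp, ← Functor.map_comp]; rfl)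
    | (rw [show TopCat.ofHom (g.comp f) = TopCat.ofHom f ≫ TopCat.ofHom g from rfl,
          Functor.map_comp, Functor.whiskerRight_comp]; exact Functor.map_comp _ _ _)

/-- Relative singular homology `H_k(U, U \ A; G)` of the pair of subspaces `(U, U \ A)` of `X`,
defined as the homology of the cokernel of the chain map induced by the inclusion
`U \ A ⊆ U`. -/
noncomputable def relHomology (G : Type) [AddCommGroup G] {X : Type} [TopologicalSpace X]
    (U A : Set X) (k : ℕ) : AddCommGrpCat :=
  (cokernel (singularChainsMap G
    (⟨Set.inclusion (Set.diff_subset : U \ A ⊆ U), continuous_inclusion _⟩ :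
      C(↥(U \ A), ↥U)))).homology k

/-- `A` is a `G`-homological `Z_n`-set in `X` : it is closed and `H_k(U, U \ A; G) = 0`
for all open `U ⊆ X` and all `k ≤ n`. -/
def IsHomologicalZSet (G : Type) [AddCommGroup G] {X : Type} [TopologicalSpace X]
    (n : ℕ) (A : Set X) : Prop :=
  IsClosed A ∧ ∀ U : Set X, IsOpen U → ∀ k : ℕ, k ≤ n → Subsingleton (relHomology G U A k)

section Abstract

open CategoryTheory.Abelian CategoryTheory.Abelian.Pseudoelement

attribute [local instance] CategoryTheory.Abelian.Pseudoelement.objectToSort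
  CategoryTheory.Abelian.Pseudoelement.homToFun

variable {C : Type*} [Category C] [Abelian C]

lemma cokerSeq_shortExact {X Y Z : C} (g : X ⟶ Y) (h : Y ⟶ Z) [Mono g] [Mono h] :
    (ShortComplex.mk (cokernel.map g (g ≫ h) (𝟙 X) h (by simp))
      (cokernel.desc (g ≫ h) (cokernel.π h)
        (by rw [Category.assoc, cokernel.condition, comp_zero]))
      (by rw [← cancel_epi (cokernel.π g)]; simp)).ShortExact := by
  have e1 : cokernel.π g ≫ cokernel.map g (g ≫ h) (𝟙 X) h (by simp) =
      h ≫ cokernel.π (g ≫ h) := cokernel.π_desc _ _ _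
  have e2 : cokernel.π (g ≫ h) ≫ cokernel.desc (g ≫ h) (cokernel.π h)
      (by rw [Category.assoc, cokernel.condition, comp_zero]) = cokernel.π h :=
    cokernel.π_desc _ _ _
  refine ShortComplex.ShortExact.mk' ?_ ?_ ?_
  · -- exact
    apply exact_of_pseudo_exact
    intro b hb
    dsimp only at hb ⊢
    obtain ⟨z, rfl⟩ := pseudo_surjective_of_epi (cokernel.π (g ≫ h)) b
    rw [← Pseudoelement.comp_apply] at hb
    simp only [e2] at hb
    obtain ⟨y, hy⟩ := pseudo_exact_of_exact (ShortComplex.exact_cokernel h) _ hb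
    refine ⟨(cokernel.π g) y, ?_⟩
    rw [← Pseudoelement.comp_apply]
    simp only [e1]
    rw [Pseudoelement.comp_apply, hy]
  · -- mono
    apply mono_of_zero_of_map_zero
    intro a ha
    dsimp only at ha
    obtain ⟨y, rfl⟩ := pseudo_surjective_of_epi (cokernel.π g) a
    rw [← Pseudoelement.comp_apply] at ha
    simp only [e1] at ha
    rw [Pseudoelement.comp_apply] at ha
    obtain ⟨x, hx⟩ := pseudo_exact_of_exact (ShortComplex.exact_cokernel (g ≫ h)) _ ha
    rw [Pseudoelement.comp_apply] at hx
    have hx' : g x = y := pseudo_injective_of_mono h hx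
    rw [← hx', ← Pseudoelement.comp_apply]
    simp only [cokernel.condition]
    exact Pseudoelement.zero_apply _ _
  · -- epi
    exact epi_of_epi_fac e2
end Abstract

section Degreewise

lemma mono_of_degreewise {K L : ChainComplex AddCommGrpCat ℕ} (f : K ⟶ L)
    (hf : ∀ n, Mono (f.f n)) : Mono f := by
  constructor
  intro W u v huv
  ext n x
  have h2 := congrArg (fun w => HomologicalComplex.Hom.f w n) huv
  simp only [HomologicalComplex.comp_f] at h2
  haveI := hf n
  rw [show u.f n = v.f n from (cancel_mono (f.f n)).1 h2]

lemma postcomp_injective {X Y : TopCat} (f : X ⟶ Y) (hf : Function.Injective f)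
    (m : SimplexCategoryᵒᵖ) (σ τ : SimplexCategory.toTop.obj m.unop ⟶ X)
    (hst : σ ≫ f = τ ≫ f) : σ = τ := by
  ext x
  apply hf
  simpa using ConcreteCategory.congr_hom hst x

lemma toSSet_map_app_injective {X Y : TopCat} (f : X ⟶ Y) (hf : Function.Injective f)
    (m : SimplexCategoryᵒᵖ) : Function.Injective ((TopCat.toSSet.map f).app m) := by
  intro σ τ hst
  have h' := congrArg ULift.down hst
  cases σ; cases τ
  congr 1
  exact postcomp_injective f hf m _ _ h'

lemma mono_singularChainsMap (G : Type) [AddCommGroup G] {X Y : Type} [TopologicalSpace X]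
    [TopologicalSpace Y] (f : C(X, Y)) (hf : Function.Injective f) :
    Mono (singularChainsMap G f) := by
  apply mono_of_degreewise
  intro n
  have e : (singularChainsMap G f).f n =
      AddCommGrpCat.ofHom (Finsupp.mapDomain.addMonoidHom
        ((TopCat.toSSet.map (TopCat.ofHom f : TopCat.of X ⟶ TopCat.of Y)).app
          (Opposite.op (SimplexCategory.mk n)))) := rfl
  rw [e]
  exact (AddCommGrpCat.mono_iff_injective _).2
    (Finsupp.mapDomain_injective (toSSet_map_app_injective _ hf _))

end Degreewise

section Triple

lemma subsingleton_of_isZero {A : AddCommGrpCat} (h : CategoryTheory.Limits.IsZero A) :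
    Subsingleton A := by
  constructor
  intro x y
  have e : (𝟙 A : A ⟶ A) = 0 := h.eq_of_src _ _
  have key : ∀ z : A, z = 0 := by
    intro z
    have : (𝟙 A : A ⟶ A) z = (0 : A ⟶ A) z := by rw [e]
    simpa using this
  rw [key x, key y]

lemma isZero_of_subsingleton' {A : AddCommGrpCat} (h : Subsingleton A) :
    CategoryTheory.Limits.IsZero A :=
  @AddCommGrpCat.isZero_of_subsingleton A h

lemma triple_lemma (G : Type) [AddCommGroup G] {X : Type} [TopologicalSpace X]
    {S T U : Set X} (hST : S ⊆ T) (hTU : T ⊆ U) (k : ℕ)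
    (h1 : Subsingleton ((cokernel (singularChainsMap G
      (⟨Set.inclusion hST, continuous_inclusion hST⟩ : C(↥S, ↥T)))).homology k))
    (h3 : Subsingleton ((cokernel (singularChainsMap G
      (⟨Set.inclusion hTU, continuous_inclusion hTU⟩ : C(↥T, ↥U)))).homology k)) :
    Subsingleton ((cokernel (singularChainsMap G
      (⟨Set.inclusion (hST.trans hTU), continuous_inclusion (hST.trans hTU)⟩ :
        C(↥S, ↥U)))).homology k) := by
  set g := singularChainsMap G (⟨Set.inclusion hST, continuous_inclusion hST⟩ : C(↥S, ↥T))
    with hg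
  set h := singularChainsMap G (⟨Set.inclusion hTU, continuous_inclusion hTU⟩ : C(↥T, ↥U))
    with hh
  have hcomp : singularChainsMap G
      (⟨Set.inclusion (hST.trans hTU), continuous_inclusion (hST.trans hTU)⟩ : C(↥S, ↥U)) =
      g ≫ h := by
    rw [hg, hh, ← singularChainsMap_comp]
    congr 1
  rw [hcomp]
  haveI : Mono g := mono_singularChainsMap G _ (Set.inclusion_injective hST)
  haveI : Mono h := mono_singularChainsMap G _ (Set.inclusion_injective hTU)
  have hse := cokerSeq_shortExact g h
  have hex := hse.homology_exact₂ k
  have hz1 : CategoryTheory.Limits.IsZero ((cokernel g).homology k) :=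
    isZero_of_subsingleton' h1
  have hz3 : CategoryTheory.Limits.IsZero ((cokernel h).homology k) :=
    isZero_of_subsingleton' h3
  apply subsingleton_of_isZero
  exact hex.isZero_X₂ (hz1.eq_of_src _ _) (hz3.eq_of_tgt _ _)

noncomputable def pairH (G : Type) [AddCommGroup G] {X : Type} [TopologicalSpace X]
    (S U : Set X) (h : S ⊆ U) (k : ℕ) : AddCommGrpCat :=
  (cokernel (singularChainsMap G
    (⟨Set.inclusion h, continuous_inclusion h⟩ : C(↥S, ↥U)))).homology k

lemma pairH_congr (G : Type) [AddCommGroup G] {X : Type} [TopologicalSpace X]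
    {S₁ S₂ U : Set X} (e : S₁ = S₂) (h₁ : S₁ ⊆ U) (k : ℕ) :
    pairH G S₁ U h₁ k = pairH G S₂ U (e ▸ h₁) k := by
  subst e
  rfl

end Triple

/-- The union of two `G`-homological `Z_n`-sets is a `G`-homological `Z_n`-set. -/
theorem stmt4 (G : Type) [AddCommGroup G] {X : Type} [TopologicalSpace X] (n : ℕ)
    (A B : Set X) (hA : IsClosed A) (hB : IsClosed B)
    (hAv : ∀ U : Set X, IsOpen U → ∀ k : ℕ, k ≤ n → Subsingleton (relHomology G U A k))
    (hBv : ∀ U : Set X, IsOpen U → ∀ k : ℕ, k ≤ n → Subsingleton (relHomology G U B k)) :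
    ∀ U : Set X, IsOpen U → ∀ k : ℕ, k ≤ n → Subsingleton (relHomology G U (A ∪ B) k) := by
  intro U hU k hk
  have hUA : IsOpen (U \ A) := hU.sdiff hA
  have h1 := hBv (U \ A) hUA k hk
  have h3 := hAv U hU k hk
  have key := triple_lemma G (show (U \ A) \ B ⊆ U \ A from Set.diff_subset)
      (show U \ A ⊆ U from Set.diff_subset) k h1 h3
  show Subsingleton (pairH G (U \ (A ∪ B)) U Set.diff_subset k)
  rw [pairH_congr G (show U \ (A ∪ B) = (U \ A) \ B from (Set.diff_diff).symm)
    Set.diff_subset k]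
  exact key
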